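/- Let 𝒫 = ⟨P, ⊴⟩ be a preorder PR on a Kripke structure (Σ, →, ℓ). If (i) B ⊴ C, b ∈ B, c ∈ C imply ℓ(b) = ℓ(c); (ii) B →∃ C and B ⊴ D imply D →∃ μ𝒫(C); and (iii) for every C ∈ P, every block of P is either contained in or disjoint from pre(μ𝒫(C)); then Rel(𝒫) is a simulation relation on the Kripke structure. -/
import Mathlib


/-- `pre(T) = {s | ∃ t ∈ T, s → t}`. -/
def preR {α : Type*} (tr : α → α → Prop) (T : Set α) : Set α :=
  {s | ∃ t ∈ T, tr s t}

/-- `S₁ →∃ S₂` iff some state of `S₁` has a transition into `S₂`. -/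
def exE {α : Type*} (tr : α → α → Prop) (S T : Set α) : Prop :=
  ∃ s ∈ S, ∃ t ∈ T, tr s t

/-- `μ𝒫(X) = ⋃ {C ∈ P | ∃ s ∈ X, P(s) ⊴ C}`, with the partition given by the
block map `blk`. -/
def muB {α : Type*} (blk : α → Set α) (ord : Set α → Set α → Prop)
    (X : Set α) : Set α :=
  {y | ∃ s ∈ X, ord (blk s) (blk y)}

/-- `R` is a simulation on the Kripke structure `(α, tr, lab)`. -/
def IsSim {α AP : Type*} (tr : α → α → Prop) (lab : α → Set AP)
    (R : α → α → Prop) : Prop :=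
  ∀ s s', R s s' → lab s = lab s' ∧ ∀ t, tr s t → ∃ t', tr s' t' ∧ R t t'

/-- Sufficiency part of the characterization theorem: for a preorder PR
`𝒫 = ⟨P,⊴⟩`, conditions (i) labels agree on related blocks, (ii)
`B →∃ C` and `B ⊴ D` imply `D →∃ μ𝒫(C)`, and (iii) every block is contained
in or disjoint from `pre(μ𝒫(C))`, imply that `Rel(𝒫)` is a simulation. -/
theorem stmt2 {α AP : Type*} (tr : α → α → Prop) (lab : α → Set AP)
    (blk : α → Set α)
    (hmem : ∀ s, s ∈ blk s)
    (hrep : ∀ s t, s ∈ blk t → blk s = blk t)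
    (ord : Set α → Set α → Prop)
    (hrefl : ∀ s : α, ord (blk s) (blk s))
    (htrans : ∀ s t u : α, ord (blk s) (blk t) → ord (blk t) (blk u) →
      ord (blk s) (blk u))
    (hi : ∀ b c : α, ord (blk b) (blk c) → ∀ x ∈ blk b, ∀ y ∈ blk c,
      lab x = lab y)
    (hii : ∀ b c d : α, exE tr (blk b) (blk c) → ord (blk b) (blk d) →
      exE tr (blk d) (muB blk ord (blk c)))
    (hiii : ∀ c b : α, blk b ⊆ preR tr (muB blk ord (blk c)) ∨
      blk b ∩ preR tr (muB blk ord (blk c)) = ∅) :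
    IsSim tr lab (fun s t => ord (blk s) (blk t)) := by
  intro s s' hss'
  refine ⟨hi s s' hss' s (hmem s) s' (hmem s'), ?_⟩
  intro t hst
  have hE : exE tr (blk s') (muB blk ord (blk t)) :=
    hii s t s' ⟨s, hmem s, t, hmem t, hst⟩ hss'
  obtain ⟨w, hw, u, hu, hwu⟩ := hE
  have hsub : blk s' ⊆ preR tr (muB blk ord (blk t)) := by
    rcases hiii t s' with h | h
    · exact h
    · exact absurd (Set.eq_empty_iff_forall_notMem.mp h w ⟨hw, u, hu, hwu⟩) (by simp)
  obtain ⟨t', ht', hst'⟩ := hsub (hmem s')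
  obtain ⟨r, hr, hord⟩ := ht'
  exact ⟨t', hst', by rwa [hrep r t hr] at hord⟩
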